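/- With the same setup, the function 1/a₂(P₁) = r̃₂(P₁) + g(P₁)·r̃₁(P₁) is strictly increasing on [0,P] when h₁ > h₂ > 0; its derivative equals (h₁−h₂)h₁h₂/(h₁+h₁h₂P₁)² · γ(h₁P₁), which is positive for P₁ > 0. -/

import Mathlib

noncomputable def γ (x : ℝ) : ℝ := Real.logb 2 (1 + x) / 2

theorem gbc_inv_a₂_strictMono (h₁ h₂ P : ℝ)
    (hh : h₂ < h₁) (hh₂ : 0 < h₂) (hP : 0 < P) :
    let g : ℝ → ℝ := fun P₁ => (1 / h₁ + P₁) / (1 / h₂ + P₁)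
    let f : ℝ → ℝ := fun P₁ => (γ (h₂ * P) - γ (h₂ * P₁)) + g P₁ * γ (h₁ * P₁)
    StrictMonoOn f (Set.Icc 0 P) ∧
    ∀ P₁ ∈ Set.Icc (0 : ℝ) P,
      deriv f P₁ = (h₁ - h₂) * h₁ * h₂ / (h₁ + h₁ * h₂ * P₁) ^ 2 * γ (h₁ * P₁) ∧
      (0 < P₁ → 0 < deriv f P₁) := by
  intro g f
  have hh₁ : 0 < h₁ := hh₂.trans hh
  have hlog2 : (0:ℝ) < Real.log 2 := Real.log_pos (by norm_num)
  have key : ∀ x : ℝ, 0 ≤ x →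
      HasDerivAt f ((h₁ - h₂) * h₁ * h₂ / (h₁ + h₁ * h₂ * x) ^ 2 * γ (h₁ * x)) x := by
    intro x hx
    have h1x : (0:ℝ) < 1 + h₁ * x := by nlinarith
    have h2x : (0:ℝ) < 1 + h₂ * x := by nlinarith
    have hden : (0:ℝ) < 1 / h₂ + x := by positivity
    have d1 : HasDerivAt (fun y => Real.log (1 + h₁ * y)) (h₁ / (1 + h₁ * x)) x := by
      have hlin : HasDerivAt (fun y => 1 + h₁ * y) h₁ x := by
        simpa using ((hasDerivAt_id x).const_mul h₁).const_add 1
      simpa [div_eq_inv_mul, Function.comp_def] using (Real.hasDerivAt_log h1x.ne').comp x hlin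
    have d2 : HasDerivAt (fun y => Real.log (1 + h₂ * y)) (h₂ / (1 + h₂ * x)) x := by
      have hlin : HasDerivAt (fun y => 1 + h₂ * y) h₂ x := by
        simpa using ((hasDerivAt_id x).const_mul h₂).const_add 1
      simpa [div_eq_inv_mul, Function.comp_def] using (Real.hasDerivAt_log h2x.ne').comp x hlin
    have dγ1 : HasDerivAt (fun y => γ (h₁ * y)) (h₁ / (1 + h₁ * x) / Real.log 2 / 2) x := by
      have := (d1.div_const (Real.log 2)).div_const 2
      simpa [γ, Real.logb] using this
    have dγ2 : HasDerivAt (fun y => γ (h₂ * y)) (h₂ / (1 + h₂ * x) / Real.log 2 / 2) x := by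
      have := (d2.div_const (Real.log 2)).div_const 2
      simpa [γ, Real.logb] using this
    have dnum : HasDerivAt (fun y : ℝ => 1 / h₁ + y) 1 x := by
      simpa using (hasDerivAt_id x).const_add (1 / h₁)
    have dden : HasDerivAt (fun y : ℝ => 1 / h₂ + y) 1 x := by
      simpa using (hasDerivAt_id x).const_add (1 / h₂)
    have dg : HasDerivAt g
        ((1 * (1 / h₂ + x) - (1 / h₁ + x) * 1) / (1 / h₂ + x) ^ 2) x :=
      dnum.div dden hden.ne'
    have df := ((hasDerivAt_const x (γ (h₂ * P))).sub dγ2).add (dg.mul dγ1)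
    have heq : (0 - h₂ / (1 + h₂ * x) / Real.log 2 / 2) +
        (((1 * (1 / h₂ + x) - (1 / h₁ + x) * 1) / (1 / h₂ + x) ^ 2) * γ (h₁ * x)
          + g x * (h₁ / (1 + h₁ * x) / Real.log 2 / 2)) =
        (h₁ - h₂) * h₁ * h₂ / (h₁ + h₁ * h₂ * x) ^ 2 * γ (h₁ * x) := by
      show _ = _
      simp only [γ, Real.logb, g]
      have e1 : (1:ℝ) / h₂ + x = (1 + h₂ * x) / h₂ := by field_simp
      have e2 : h₁ + h₁ * h₂ * x = h₁ * (1 + h₂ * x) := by ring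
      field_simp
      all_goals ring
    exact heq ▸ df
  have hposγ : ∀ x : ℝ, 0 < x → 0 < γ (h₁ * x) := by
    intro x hx
    have : (1:ℝ) < 1 + h₁ * x := by nlinarith
    have := Real.logb_pos one_lt_two this
    simp only [γ]
    linarith
  have hderivpos : ∀ x : ℝ, 0 ≤ x → 0 < x →
      0 < (h₁ - h₂) * h₁ * h₂ / (h₁ + h₁ * h₂ * x) ^ 2 * γ (h₁ * x) := by
    intro x hx0 hx
    have hd : (0:ℝ) < h₁ + h₁ * h₂ * x := by positivity
    have := hposγ x hx
    have h1 : (0:ℝ) < (h₁ - h₂) * h₁ * h₂ := by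
      have : 0 < h₁ - h₂ := by linarith
      positivity
    positivity
  constructor
  · apply strictMonoOn_of_deriv_pos (convex_Icc 0 P)
    · exact fun x hx => (key x hx.1).continuousAt.continuousWithinAt
    · intro x hx
      rw [interior_Icc] at hx
      rw [(key x hx.1.le).deriv]
      exact hderivpos x hx.1.le hx.1
  · intro P₁ hP₁
    rw [(key P₁ hP₁.1).deriv]
    exact ⟨rfl, fun hpos => hderivpos P₁ hP₁.1 hpos⟩
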